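/- arXiv:2209.10222 — 3 statements merged into one kernel-verified Lean document; each statement's English description precedes it below -/
import Mathlib

section
/- If random variables Y and X^{(z)} are conditionally independent given Z (where Z takes finitely many values), then the conditional distribution p(Y | X^{(z)}) equals p(Y | T(X^{(z)})) where T(x) = p_Z(·|X^{(z)}=x) is the posterior distribution of Z given X^{(z)}; i.e., the posterior of Z is a sufficient statistic of X^{(z)} for inferring Y. -/
open Finset

noncomputable def prob {Ω : Type*} [Fintype Ω] (p : Ω → ℝ) (A : Set Ω) : ℝ :=
  ∑ ω, A.indicator p ω

noncomputable def cprob {Ω : Type*} [Fintype Ω] (p : Ω → ℝ) (A B : Set Ω) : ℝ :=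
  prob p (A ∩ B) / prob p B

lemma prob_nonneg' {Ω : Type*} [Fintype Ω] {p : Ω → ℝ} (hp : ∀ ω, 0 ≤ p ω) (A : Set Ω) :
    0 ≤ prob p A :=
  Finset.sum_nonneg fun ω _ => Set.indicator_nonneg (fun ω _ => hp ω) ω

lemma prob_mono' {Ω : Type*} [Fintype Ω] {p : Ω → ℝ} (hp : ∀ ω, 0 ≤ p ω) {A B : Set Ω}
    (h : A ⊆ B) : prob p A ≤ prob p B :=
  Finset.sum_le_sum fun ω _ => Set.indicator_le_indicator_of_subset h hp ω

lemma prob_empty' {Ω : Type*} [Fintype Ω] (p : Ω → ℝ) : prob p (∅ : Set Ω) = 0 := by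
  simp [prob]

lemma prob_eq_zero' {Ω : Type*} [Fintype Ω] {p : Ω → ℝ} (hp : ∀ ω, 0 ≤ p ω) {A B : Set Ω}
    (h : A ⊆ B) (hB : ¬ 0 < prob p B) : prob p A = 0 :=
  le_antisymm (le_of_not_gt (fun hA => hB (lt_of_lt_of_le hA (prob_mono' hp h))))
    (prob_nonneg' hp A)

lemma prob_partition' {Ω 𝒵 : Type*} [Fintype Ω] [Fintype 𝒵] (p : Ω → ℝ) (A : Set Ω)
    (g : Ω → 𝒵) : prob p A = ∑ z, prob p (A ∩ {ω | g ω = z}) := by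
  classical
  unfold prob
  rw [Finset.sum_comm]
  refine Finset.sum_congr rfl fun ω _ => ?_
  by_cases hA : ω ∈ A
  · simp [Set.indicator_apply, hA, Set.mem_inter_iff, Set.mem_setOf_eq]
  · simp [Set.indicator_apply, hA, Set.mem_inter_iff]

/-- If Y ⊥ X | Z, then the posterior of Z given X is a sufficient statistic of X for
inferring Y: p(Y = y | X = x) = p(Y = y | T (X) = T x), where T x = p(Z = · | X = x). -/
theorem stmt0 {Ω 𝒴 𝒳 𝒵 : Type*} [Fintype Ω] [Fintype 𝒴] [Fintype 𝒳] [Fintype 𝒵]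
    (p : Ω → ℝ) (hp : ∀ ω, 0 ≤ p ω) (hpsum : ∑ ω, p ω = 1)
    (Y : Ω → 𝒴) (X : Ω → 𝒳) (Z : Ω → 𝒵)
    (hCI : ∀ y x z, 0 < prob p {ω | Z ω = z} →
      cprob p {ω | Y ω = y ∧ X ω = x} {ω | Z ω = z}
        = cprob p {ω | Y ω = y} {ω | Z ω = z} * cprob p {ω | X ω = x} {ω | Z ω = z})
    (T : 𝒳 → 𝒵 → ℝ)
    (hT : ∀ x z, T x z = cprob p {ω | Z ω = z} {ω | X ω = x}) :
    ∀ y x, 0 < prob p {ω | X ω = x} →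
      cprob p {ω | Y ω = y} {ω | X ω = x}
        = cprob p {ω | Y ω = y} {ω | T (X ω) = T x} := by
  intro y x hx
  classical
  set c : 𝒵 → ℝ := fun z => cprob p {ω | Y ω = y} {ω | Z ω = z} with hc
  -- Step 1: conditional independence gives a product formula
  have key : ∀ x', prob p {ω | Y ω = y ∧ X ω = x'}
      = ∑ z, c z * prob p ({ω | Z ω = z} ∩ {ω | X ω = x'}) := by
    intro x'
    rw [prob_partition' p {ω | Y ω = y ∧ X ω = x'} Z]
    refine Finset.sum_congr rfl fun z _ => ?_
    by_cases hz : 0 < prob p {ω | Z ω = z}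
    · have h1 := hCI y x' z hz
      have hzne : prob p {ω | Z ω = z} ≠ 0 := ne_of_gt hz
      have e1 : prob p ({ω | Y ω = y ∧ X ω = x'} ∩ {ω | Z ω = z})
          = cprob p {ω | Y ω = y ∧ X ω = x'} {ω | Z ω = z} * prob p {ω | Z ω = z} := by
        rw [cprob, div_mul_cancel₀ _ hzne]
      have e2 : cprob p {ω | X ω = x'} {ω | Z ω = z} * prob p {ω | Z ω = z}
          = prob p ({ω | X ω = x'} ∩ {ω | Z ω = z}) := by
        rw [cprob, div_mul_cancel₀ _ hzne]
      rw [e1, h1, mul_assoc, e2]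
      congr 1
      · congr 1
        ext ω
        simp [Set.mem_inter_iff, Set.mem_setOf_eq, and_comm]
    · have hz0 : prob p ({ω | Y ω = y ∧ X ω = x'} ∩ {ω | Z ω = z}) = 0 :=
        prob_eq_zero' hp (Set.inter_subset_right) hz
      have hz1 : prob p ({ω | Z ω = z} ∩ {ω | X ω = x'}) = 0 :=
        prob_eq_zero' hp (Set.inter_subset_left) hz
      rw [hz0, hz1, mul_zero]
  -- Step 2: rewrite via T
  have key2 : ∀ x', prob p {ω | Y ω = y ∧ X ω = x'}
      = (∑ z, c z * T x' z) * prob p {ω | X ω = x'} := by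
    intro x'
    by_cases hx' : 0 < prob p {ω | X ω = x'}
    · have hxne : prob p {ω | X ω = x'} ≠ 0 := ne_of_gt hx'
      rw [key x', Finset.sum_mul]
      refine Finset.sum_congr rfl fun z _ => ?_
      rw [hT x' z, cprob, mul_assoc, div_mul_cancel₀ _ hxne]
    · have h0 : prob p {ω | X ω = x'} = 0 :=
        prob_eq_zero' hp (le_refl _) hx'
      have h1 : prob p {ω | Y ω = y ∧ X ω = x'} = 0 :=
        prob_eq_zero' hp (fun ω hω => hω.2) hx'
      rw [h0, h1, mul_zero]
  set S : ℝ := ∑ z, c z * T x z with hS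
  -- Step 3: aggregate over the fiber of T
  have hE1 : prob p ({ω | Y ω = y} ∩ {ω | T (X ω) = T x})
      = S * prob p {ω | T (X ω) = T x} := by
    rw [prob_partition' p ({ω | Y ω = y} ∩ {ω | T (X ω) = T x}) X,
        prob_partition' p {ω | T (X ω) = T x} X, Finset.mul_sum]
    refine Finset.sum_congr rfl fun x' _ => ?_
    by_cases ht : T x' = T x
    · have e1 : {ω | Y ω = y} ∩ {ω | T (X ω) = T x} ∩ {ω | X ω = x'}
          = {ω | Y ω = y ∧ X ω = x'} := by
        ext ω
        simp only [Set.mem_inter_iff, Set.mem_setOf_eq]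
        constructor
        · rintro ⟨⟨h1, _⟩, h2⟩; exact ⟨h1, h2⟩
        · rintro ⟨h1, h2⟩; exact ⟨⟨h1, by rw [h2, ht]⟩, h2⟩
      have e2 : {ω | T (X ω) = T x} ∩ {ω | X ω = x'} = {ω | X ω = x'} := by
        ext ω
        simp only [Set.mem_inter_iff, Set.mem_setOf_eq]
        constructor
        · rintro ⟨_, h2⟩; exact h2
        · intro h2; exact ⟨by rw [h2, ht], h2⟩
      rw [e1, e2, key2 x', ht, hS]
    · have e1 : {ω | Y ω = y} ∩ {ω | T (X ω) = T x} ∩ {ω | X ω = x'} = (∅ : Set Ω) := by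
        ext ω
        simp only [Set.mem_inter_iff, Set.mem_setOf_eq, Set.mem_empty_iff_false, iff_false]
        rintro ⟨⟨_, h1⟩, h2⟩
        exact ht (h2 ▸ h1)
      have e2 : {ω | T (X ω) = T x} ∩ {ω | X ω = x'} = (∅ : Set Ω) := by
        ext ω
        simp only [Set.mem_inter_iff, Set.mem_setOf_eq, Set.mem_empty_iff_false, iff_false]
        rintro ⟨h1, h2⟩
        exact ht (h2 ▸ h1)
      rw [e1, e2, prob_empty', mul_zero]
  have hEpos : 0 < prob p {ω | T (X ω) = T x} :=
    lt_of_lt_of_le hx (prob_mono' hp (fun ω hω => by simp [Set.mem_setOf_eq] at hω ⊢; rw [hω]))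
  have hL : cprob p {ω | Y ω = y} {ω | X ω = x} = S := by
    rw [cprob]
    have e : ({ω | Y ω = y} ∩ {ω | X ω = x}) = {ω | Y ω = y ∧ X ω = x} := rfl
    rw [e, key2 x, mul_div_assoc, div_self (ne_of_gt hx), mul_one]
  have hR : cprob p {ω | Y ω = y} {ω | T (X ω) = T x} = S := by
    rw [cprob, hE1, mul_div_assoc, div_self (ne_of_gt hEpos), mul_one]
  rw [hL, hR]
end

section
/- Under the conditional i.i.d. factorization p(X_0=δ, X=x | Z=z') = p(X_0=δ|Z=z')·p(X=x|Z=z'), if r(x) := max_{z'≠z} [p(Z=z')p(X=x|Z=z')] / [p(Z=z)p(X=x|Z=z)] ≤ σ^{-1}-1 and for all z'≠z, p(X_0=δ|Z=z')/p(X_0=δ|Z=z) ≤ G[(1-ζ)^{-1}-1] with ζ defined so that (σ^{-1}-1)(K-1)G[(1-ζ)^{-1}-1] = (1-η/2)^{-1}-1, then p(Z=z | X_0=δ, X=x) ≥ 1-η/2. -/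
open Finset

/-- Under the conditional i.i.d. factorization p(X₀=δ, X=x | Z=z') = p(X₀=δ|Z=z')·p(X=x|Z=z'),
if r(x) = max_{z'≠z} [pZ z' · q₁ z'] / [pZ z · q₁ z] ≤ σ⁻¹ - 1 and each trigger likelihood
ratio q₀ z' / q₀ z ≤ G·((1-ζ)⁻¹ - 1), with ζ chosen so that
(σ⁻¹-1)(K-1)G((1-ζ)⁻¹-1) = (1-η/2)⁻¹-1, then the posterior
p(Z=z | X₀=δ, X=x) = pZ z · q₀ z · q₁ z / ∑ z', pZ z' · q₀ z' · q₁ z' is at least 1-η/2. -/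
theorem stmt3 {𝒵 : Type*} [Fintype 𝒵] [DecidableEq 𝒵]
    (K : ℕ) (hK : Fintype.card 𝒵 = K) (z : 𝒵)
    (pZ : 𝒵 → ℝ) (hpZ : ∀ z', 0 < pZ z') (hpZsum : ∑ z', pZ z' = 1)
    (q0 q1 : 𝒵 → ℝ) (hq0 : ∀ z', 0 ≤ q0 z') (hq1 : ∀ z', 0 ≤ q1 z')
    (hq0z : 0 < q0 z) (hq1z : 0 < q1 z)
    (σ η G ζ : ℝ) (hσ : 0 < σ) (hσ1 : σ < 1) (hη : 0 < η) (hη1 : η < 1)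
    (hG : 0 < G) (hζ0 : 0 < ζ) (hζ1 : ζ < 1)
    (hr : ∀ z' ≠ z, pZ z' * q1 z' / (pZ z * q1 z) ≤ σ⁻¹ - 1)
    (h0 : ∀ z' ≠ z, q0 z' / q0 z ≤ G * ((1 - ζ)⁻¹ - 1))
    (hζ : (σ⁻¹ - 1) * ((K : ℝ) - 1) * G * ((1 - ζ)⁻¹ - 1) = (1 - η/2)⁻¹ - 1) :
    1 - η/2 ≤ pZ z * q0 z * q1 z / ∑ z', pZ z' * q0 z' * q1 z' := by
  set A := pZ z * q0 z * q1 z with hA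
  have hApos : 0 < A := by
    have := hpZ z; rw [hA]; positivity
  set c : ℝ := (σ⁻¹ - 1) * (G * ((1 - ζ)⁻¹ - 1)) with hc
  have hbound : ∀ z' ≠ z, pZ z' * q0 z' * q1 z' ≤ A * c := by
    intro z' hz'
    have h1 : pZ z' * q1 z' ≤ (σ⁻¹ - 1) * (pZ z * q1 z) := by
      have := hr z' hz'
      have hpq : 0 < pZ z * q1 z := by have := hpZ z; positivity
      rw [div_le_iff₀ hpq] at this
      linarith
    have h2 : q0 z' ≤ G * ((1 - ζ)⁻¹ - 1) * q0 z := by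
      have := h0 z' hz'
      rw [div_le_iff₀ hq0z] at this
      exact this
    have h1n : 0 ≤ pZ z' * q1 z' := by
      have := (hpZ z').le; have := hq1 z'; positivity
    have h2n : 0 ≤ q0 z' := hq0 z'
    calc pZ z' * q0 z' * q1 z' = (pZ z' * q1 z') * q0 z' := by ring
      _ ≤ ((σ⁻¹ - 1) * (pZ z * q1 z)) * (G * ((1 - ζ)⁻¹ - 1) * q0 z) := by
          apply mul_le_mul h1 h2 h2n
          have hσi : 1 < σ⁻¹ := (one_lt_inv₀ hσ).mpr hσ1
          have h3 : 0 ≤ σ⁻¹ - 1 := by linarith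
          have := hpZ z
          positivity
      _ = A * c := by rw [hA, hc]; ring
  have hsplit : ∑ z', pZ z' * q0 z' * q1 z'
      = A + ∑ z' ∈ univ.erase z, pZ z' * q0 z' * q1 z' := by
    rw [← Finset.add_sum_erase _ _ (mem_univ z)]
  have hsum2 : ∑ z' ∈ univ.erase z, pZ z' * q0 z' * q1 z' ≤ ((K : ℝ) - 1) * (A * c) := by
    calc ∑ z' ∈ univ.erase z, pZ z' * q0 z' * q1 z'
        ≤ ∑ _z' ∈ univ.erase z, A * c := by
          apply Finset.sum_le_sum
          intro i hi
          exact hbound i (Finset.ne_of_mem_erase hi)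
      _ = ((K : ℝ) - 1) * (A * c) := by
          rw [Finset.sum_const, Finset.card_erase_of_mem (mem_univ z), Finset.card_univ, hK]
          have hK1 : 1 ≤ K := by
            rw [← hK]; exact Fintype.card_pos_iff.mpr ⟨z⟩
          rw [nsmul_eq_mul, Nat.cast_sub hK1, Nat.cast_one]
  have hηpos : 0 < 1 - η / 2 := by linarith
  have hkey : ((K : ℝ) - 1) * c = (1 - η/2)⁻¹ - 1 := by
    rw [hc]; rw [← hζ]; ring
  have hS : ∑ z', pZ z' * q0 z' * q1 z' ≤ A * (1 - η/2)⁻¹ := by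
    rw [hsplit]
    have : A + ((K : ℝ) - 1) * (A * c) = A * (1 + ((K:ℝ)-1) * c) := by ring
    calc A + ∑ z' ∈ univ.erase z, pZ z' * q0 z' * q1 z'
        ≤ A + ((K : ℝ) - 1) * (A * c) := by linarith
      _ = A * (1 + ((K:ℝ)-1) * c) := by ring
      _ = A * (1 - η/2)⁻¹ := by rw [hkey]; ring
  have hSpos : 0 < ∑ z', pZ z' * q0 z' * q1 z' := by
    rw [hsplit]
    have : 0 ≤ ∑ z' ∈ univ.erase z, pZ z' * q0 z' * q1 z' := by
      apply Finset.sum_nonneg; intro i _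
      have := hpZ i; have := hq0 i; have := hq1 i; positivity
    linarith
  rw [le_div_iff₀ hSpos]
  calc (1 - η/2) * ∑ z', pZ z' * q0 z' * q1 z'
      ≤ (1 - η/2) * (A * (1 - η/2)⁻¹) := by
        exact mul_le_mul_of_nonneg_left hS (le_of_lt hηpos)
    _ = A := by
        rw [mul_comm (1 - η/2), mul_assoc, inv_mul_cancel₀ (ne_of_gt hηpos), mul_one]
end

section
/- If a sequence of triggers δ_n satisfies p(Z=z|X_0=δ_n) → 1, and X_0 is conditionally independent of X_1 given Z, and for all x outside a set B with p(X_1∈B) ≤ ε the ratio r(x) = max_{z'≠z}[p(Z=z')p(X_1=x|Z=z')]/[p(Z=z)p(X_1=x|Z=z)] is bounded by σ^{-1}-1, then liminf_n p(X_1 ∈ {x : p(Z=z|X_0=δ_n, X_1=x) ≥ 1-η}) ≥ 1-ε for every η satisfying (1-η/2)^{-1} > 1 + (σ^{-1}-1)(K-1)·max_{z'≠z}p(Z=z)/p(Z=z')·ω_n with ω_n = max_{z'≠z} p(X_0=δ_n|Z=z')/p(X_0=δ_n|Z=z) → 0. -/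
open Finset Filter

/-- If p(Z=z|X₀=δₙ) → 1 (equivalently the likelihood-ratio bound ωₙ → 0), X₀ ⊥ X₁ | Z,
and outside a set B with p(X₁ ∈ B) ≤ ε the ratio r(x) is bounded by σ⁻¹-1, then
liminfₙ p(X₁ ∈ {x : p(Z=z|X₀=δₙ, X₁=x) ≥ 1-η}) ≥ 1-ε, for η satisfying
(1-η/2)⁻¹ > 1 + (σ⁻¹-1)(K-1)·G·ωₙ.  Here `pZ` is the prior, `q w x = p(X₁=x|Z=w)`,
`a n w = p(X₀=δₙ|Z=w)`, p(X₁=x) = ∑ w, pZ w · q w x, and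
p(Z=z|X₀=δₙ,X₁=x) = pZ z · a n z · q z x / ∑ w, pZ w · a n w · q w x by Bayes. -/
theorem stmt18 {𝒵 𝒳 : Type*} [Fintype 𝒵] [DecidableEq 𝒵] [Fintype 𝒳]
    (K : ℕ) (hK : Fintype.card 𝒵 = K)
    (z : 𝒵) (hne : (Finset.univ.erase z).Nonempty)
    (pZ : 𝒵 → ℝ) (hpZ : ∀ w, 0 < pZ w) (hpZsum : ∑ w, pZ w = 1)
    (q : 𝒵 → 𝒳 → ℝ) (hq : ∀ w x, 0 ≤ q w x) (hqsum : ∀ w, ∑ x, q w x = 1)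
    (a : ℕ → 𝒵 → ℝ) (ha : ∀ n w, 0 < a n w)
    (σ ε η G : ℝ) (hσ : 0 < σ) (hσ1 : σ < 1) (hε : 0 < ε) (hη : 0 < η) (hη1 : η < 1)
    (hG : G = (Finset.univ.erase z).sup' hne fun w => pZ z / pZ w)
    (B : Finset 𝒳) (hB : ∑ x ∈ B, (∑ w, pZ w * q w x) ≤ ε)
    (hr : ∀ x ∉ B, ∀ w ≠ z, pZ w * q w x ≤ (σ⁻¹ - 1) * (pZ z * q z x))
    (hpost1 : Tendsto (fun n => pZ z * a n z / ∑ w, pZ w * a n w) atTop (nhds 1))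
    (hω : Tendsto (fun n => (Finset.univ.erase z).sup' hne fun w => a n w / a n z)
      atTop (nhds 0))
    (hηn : ∀ n, 1 + (σ⁻¹ - 1) * ((K : ℝ) - 1) * G
        * ((Finset.univ.erase z).sup' hne fun w => a n w / a n z) < (1 - η/2)⁻¹) :
    1 - ε ≤ liminf (fun n =>
        ∑ x, Set.indicator
          {x : 𝒳 | 1 - η ≤ pZ z * (a n z * q z x) / ∑ w, pZ w * (a n w * q w x)}
          (fun x => ∑ w, pZ w * q w x) x)
      atTop := by
  classical
  set ω : ℕ → ℝ := fun n => (Finset.univ.erase z).sup' hne fun w => a n w / a n z with hωd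
  set f : 𝒳 → ℝ := fun x => ∑ w, pZ w * q w x with hfd
  have hf0 : ∀ x, 0 ≤ f x := fun x =>
    Finset.sum_nonneg fun w _ => mul_nonneg (hpZ w).le (hq w x)
  have hfsum : ∑ x, f x = 1 := by
    rw [Finset.sum_comm]
    simp only [← Finset.mul_sum, hqsum, mul_one, hpZsum]
  have hσinv : 0 < σ⁻¹ - 1 := by
    have : 1 < σ⁻¹ := (one_lt_inv₀ hσ).mpr hσ1
    linarith
  set c : ℝ := (σ⁻¹ - 1) * ((Finset.univ.erase z).card : ℝ) with hcd
  have hc0 : 0 ≤ c := mul_nonneg hσinv.le (Nat.cast_nonneg _)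
  -- eventually c * ω n ≤ η / (1 - η)
  have hηpos : 0 < η / (1 - η) := div_pos hη (by linarith)
  have hev : ∀ᶠ n in atTop, c * ω n < η / (1 - η) := by
    have : Tendsto (fun n => c * ω n) atTop (nhds (c * 0)) := hω.const_mul c
    rw [mul_zero] at this
    exact this.eventually_lt_const hηpos
  -- eventual lower bound on the sum
  have key : ∀ᶠ n in atTop, 1 - ε ≤
      ∑ x, Set.indicator
        {x : 𝒳 | 1 - η ≤ pZ z * (a n z * q z x) / ∑ w, pZ w * (a n w * q w x)}
        f x := by
    filter_upwards [hev] with n hn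
    set S : Set 𝒳 := {x : 𝒳 | 1 - η ≤ pZ z * (a n z * q z x) / ∑ w, pZ w * (a n w * q w x)}
    have hωb : ∀ w ∈ Finset.univ.erase z, a n w ≤ ω n * a n z := by
      intro w hw
      have h1 : a n w / a n z ≤ ω n := Finset.le_sup' (fun w => a n w / a n z) hw
      have := (div_le_iff₀ (ha n z)).mp h1
      linarith
    have hcore : ∀ x ∉ B, Set.indicator S f x = f x := by
      intro x hx
      by_cases hqz : q z x = 0
      · have hfx : f x = 0 := by
          apply Finset.sum_eq_zero
          intro w _
          by_cases hwz : w = z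
          · simp [hwz, hqz]
          · have h1 := hr x hx w hwz
            have h2 : 0 ≤ pZ w * q w x := mul_nonneg (hpZ w).le (hq w x)
            have : pZ w * q w x = 0 := le_antisymm (by rw [hqz] at h1; simpa using h1) h2
            exact this
        by_cases hxS : x ∈ S <;> simp [hxS, hfx]
      · have hqzpos : 0 < q z x := lt_of_le_of_ne (hq z x) (Ne.symm hqz)
        have hxS : x ∈ S := by
          show 1 - η ≤ pZ z * (a n z * q z x) / ∑ w, pZ w * (a n w * q w x)
          set N : ℝ := pZ z * (a n z * q z x) with hNd
          have hN : 0 < N := mul_pos (hpZ z) (mul_pos (ha n z) hqzpos)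
          have hsplit : ∑ w, pZ w * (a n w * q w x)
              = (∑ w ∈ Finset.univ.erase z, pZ w * (a n w * q w x)) + N := by
            rw [Finset.sum_erase_add _ _ (Finset.mem_univ z)]
          have hrest : ∑ w ∈ Finset.univ.erase z, pZ w * (a n w * q w x)
              ≤ c * ω n * N := by
            have hterm : ∀ w ∈ Finset.univ.erase z,
                pZ w * (a n w * q w x) ≤ (σ⁻¹ - 1) * (pZ z * q z x) * (ω n * a n z) := by
              intro w hw
              have hwz : w ≠ z := Finset.ne_of_mem_erase hw
              have h1 : pZ w * q w x ≤ (σ⁻¹ - 1) * (pZ z * q z x) := hr x hx w hwz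
              have h2 : a n w ≤ ω n * a n z := hωb w hw
              have h3 : pZ w * (a n w * q w x) = (pZ w * q w x) * a n w := by ring
              rw [h3]
              have h4 : 0 ≤ pZ w * q w x := mul_nonneg (hpZ w).le (hq w x)
              calc (pZ w * q w x) * a n w ≤ ((σ⁻¹ - 1) * (pZ z * q z x)) * a n w :=
                    mul_le_mul_of_nonneg_right h1 (ha n w).le
                _ ≤ ((σ⁻¹ - 1) * (pZ z * q z x)) * (ω n * a n z) :=
                    mul_le_mul_of_nonneg_left h2
                      (mul_nonneg hσinv.le (mul_nonneg (hpZ z).le (hq z x)))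
            calc ∑ w ∈ Finset.univ.erase z, pZ w * (a n w * q w x)
                ≤ ∑ _w ∈ Finset.univ.erase z,
                    (σ⁻¹ - 1) * (pZ z * q z x) * (ω n * a n z) :=
                  Finset.sum_le_sum hterm
              _ = c * ω n * N := by
                  rw [Finset.sum_const, nsmul_eq_mul, hcd, hNd]; ring
          have hrest0 : 0 ≤ ∑ w ∈ Finset.univ.erase z, pZ w * (a n w * q w x) :=
            Finset.sum_nonneg fun w _ =>
              mul_nonneg (hpZ w).le (mul_nonneg (ha n w).le (hq w x))
          have hD : 0 < ∑ w, pZ w * (a n w * q w x) := by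
            rw [hsplit]; linarith
          rw [le_div_iff₀ hD, hsplit]
          have hcω : c * ω n ≤ η / (1 - η) := hn.le
          have h1η : 0 < 1 - η := by linarith
          have : (1 - η) * (c * ω n) ≤ (1 - η) * (η / (1 - η)) :=
            mul_le_mul_of_nonneg_left hcω h1η.le
          rw [mul_div_cancel₀ _ (ne_of_gt h1η)] at this
          nlinarith [hrest, hN]
        simp [hxS]
    calc (1 : ℝ) - ε ≤ ∑ x, f x - ∑ x ∈ B, f x := by rw [hfsum]; linarith
      _ = ∑ x ∈ Finset.univ \ B, f x := by
          rw [Finset.sum_sdiff_eq_sub (Finset.subset_univ B)]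
      _ ≤ ∑ x ∈ Finset.univ \ B, Set.indicator S f x := by
          apply Finset.sum_le_sum
          intro x hx
          rw [hcore x (Finset.mem_sdiff.mp hx).2]
      _ ≤ ∑ x, Set.indicator S f x := by
          apply Finset.sum_le_sum_of_subset_of_nonneg (Finset.sdiff_subset)
          intro x _ _
          exact Set.indicator_nonneg (fun y _ => hf0 y) x
  refine le_liminf_of_le ?_ key
  apply isCoboundedUnder_ge_of_le atTop (x := 1)
  intro n
  calc ∑ x, Set.indicator
        {x : 𝒳 | 1 - η ≤ pZ z * (a n z * q z x) / ∑ w, pZ w * (a n w * q w x)}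
        f x ≤ ∑ x, f x := by
        apply Finset.sum_le_sum
        intro x _
        exact Set.indicator_le_self' (fun y _ => hf0 y) x
    _ = 1 := hfsum
end
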